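/- Let (X,𝒜) be a minimal action of ℤ^d by homeomorphisms on a Cantor set X, let C ⊆ X be a nonempty clopen set, y ∈ C, and let R⃗_C = R_C(y) − R_C(y) be the set of return vectors. Then there exists a finite collection F⃗_C of vectors in R⃗_C such that F⃗_C = −F⃗_C and every vector in R⃗_C is a linear combination with nonnegative integer coefficients of vectors in F⃗_C. -/

import Mathlib

open Pointwise

/-- Let `(X, 𝒜)` be a minimal `ℤ^d`-action by homeomorphisms on a Cantor set `X`, `C` a
nonempty clopen subset, `y ∈ C`, and let `R⃗_C = R_C(y) − R_C(y)` be the set of return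
vectors, where `R_C(y) = {n ∈ ℤ^d : 𝒜(n, y) ∈ C}`. Then there is a finite set
`F⃗_C ⊆ R⃗_C` with `F⃗_C = −F⃗_C` such that every vector of `R⃗_C` is a linear combination
with nonnegative integer coefficients of vectors of `F⃗_C`. -/
theorem stmt5 (d : ℕ) (X : Type*) [MetricSpace X] [CompactSpace X] [Nonempty X]
    [TotallyDisconnectedSpace X] (hperf : Perfect (Set.univ : Set X))
    (A : (Fin d → ℤ) → X → X)
    (hA0 : ∀ y : X, A 0 y = y)
    (hAadd : ∀ n m : Fin d → ℤ, ∀ y : X, A (n + m) y = A n (A m y))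
    (hAcont : ∀ n : Fin d → ℤ, Continuous (A n))
    (hmin : ∀ y : X, Dense (Set.range fun n : Fin d → ℤ => A n y))
    (C : Set X) (hC : IsClopen C) (hCne : C.Nonempty) (y : X) (hy : y ∈ C) :
    ∃ F : Finset (Fin d → ℤ),
      (↑F : Set (Fin d → ℤ)) ⊆
        ({n : Fin d → ℤ | A n y ∈ C} - {n : Fin d → ℤ | A n y ∈ C}) ∧
      (∀ v ∈ F, -v ∈ F) ∧
      ∀ v ∈ ({n : Fin d → ℤ | A n y ∈ C} - {n : Fin d → ℤ | A n y ∈ C} :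
          Set (Fin d → ℤ)),
        ∃ c : (Fin d → ℤ) → ℕ, v = ∑ f ∈ F, (c f : ℤ) • f := by
  classical
  obtain ⟨R, hRdef⟩ : ∃ R : Set (Fin d → ℤ), R = {n | A n y ∈ C} := ⟨_, rfl⟩
  rw [← hRdef]
  have hRmem : ∀ n : Fin d → ℤ, n ∈ R ↔ A n y ∈ C := by
    intro n; rw [hRdef]; rfl
  -- finite subcover
  have hcov : ∃ K : Finset (Fin d → ℤ), ∀ x : X, ∃ k ∈ K, A k x ∈ C := by
    have hcover : (Set.univ : Set X) ⊆ ⋃ n : Fin d → ℤ, A n ⁻¹' C := by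
      intro x _
      obtain ⟨z, hz, hzC⟩ := (hmin x).exists_mem_open hC.2 hCne
      obtain ⟨n, rfl⟩ := hz
      exact Set.mem_iUnion.2 ⟨n, hzC⟩
    obtain ⟨K, hK⟩ := IsCompact.elim_finite_subcover (isCompact_univ (X := X))
      (fun n : Fin d → ℤ => A n ⁻¹' C) (fun n => hC.2.preimage (hAcont n)) hcover
    refine ⟨K, fun x => ?_⟩
    obtain ⟨k, hk, hkx⟩ := Set.mem_iUnion₂.1 (hK (Set.mem_univ x))
    exact ⟨k, hk, hkx⟩
  obtain ⟨K, hK⟩ := hcov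
  obtain ⟨M, hMdef⟩ : ∃ M : ℕ, M = K.sup (fun k => Finset.univ.sup fun i => (k i).natAbs) :=
    ⟨_, rfl⟩
  have hKM : ∀ k ∈ K, ∀ i, (k i).natAbs ≤ M := by
    intro k hk i
    rw [hMdef]
    exact le_trans (Finset.le_sup (f := fun i => (k i).natAbs) (Finset.mem_univ i))
      (Finset.le_sup (f := fun k => Finset.univ.sup fun i => (k i).natAbs) hk)
  clear hMdef
  have hFex : ∃ F : Finset (Fin d → ℤ), ∀ v,
      v ∈ F ↔ (v ∈ R - R ∧ ∀ i, (v i).natAbs ≤ 2 * M + 1) := by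
    have hSfin : {v : Fin d → ℤ | v ∈ R - R ∧ ∀ i, (v i).natAbs ≤ 2 * M + 1}.Finite := by
      have hsub : {v : Fin d → ℤ | v ∈ R - R ∧ ∀ i, (v i).natAbs ≤ 2 * M + 1} ⊆
          Set.pi Set.univ (fun _ : Fin d =>
            Set.Icc (-(2 * (M : ℤ) + 1)) (2 * (M : ℤ) + 1)) := by
        intro v hv i _
        have := hv.2 i
        simp only [Set.mem_Icc]
        omega
      exact Set.Finite.subset (Set.Finite.pi fun _ => Set.finite_Icc _ _) hsub
    exact ⟨hSfin.toFinset, fun v => hSfin.mem_toFinset⟩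
  obtain ⟨F, hFmem⟩ := hFex
  -- syndeticity
  have hsyn : ∀ p : Fin d → ℤ, ∃ k ∈ K, (k + p) ∈ R := by
    intro p
    obtain ⟨k, hk, hkC⟩ := hK (A p y)
    refine ⟨k, hk, ?_⟩
    rw [hRmem, hAadd]
    exact hkC
  -- key induction
  have key : ∀ n : ℕ, ∀ p r s : Fin d → ℤ, r ∈ R → s ∈ R →
      (∑ i, (r i - p i).natAbs) ≤ n → (∀ i, (s i - p i).natAbs ≤ M) →
      ∃ c : (Fin d → ℤ) → ℕ, r - s = ∑ f ∈ F, (c f : ℤ) • f := by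
    intro n
    induction n with
    | zero =>
      intro p r s hr hs hsum hsM
      have hrp : ∀ i, r i = p i := by
        intro i
        have h0 := Finset.sum_eq_zero_iff.1 (Nat.le_zero.1 hsum) i (Finset.mem_univ i)
        omega
      have hmem : r - s ∈ F := by
        rw [hFmem]
        refine ⟨Set.sub_mem_sub hr hs, fun i => ?_⟩
        have h1 := hsM i
        have h2 := hrp i
        simp only [Pi.sub_apply]
        omega
      refine ⟨fun f => if f = r - s then 1 else 0, ?_⟩
      rw [Finset.sum_eq_single (r - s)]
      · simp
      · intro b _ hb; simp [hb]
      · intro h; exact absurd hmem h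
    | succ n ih =>
      intro p r s hr hs hsum hsM
      by_cases hle : (∑ i, (r i - p i).natAbs) ≤ n
      · exact ih p r s hr hs hle hsM
      · obtain ⟨i₀, -, hi₀⟩ := Finset.exists_ne_zero_of_sum_ne_zero (by omega :
          (∑ i, (r i - p i).natAbs) ≠ 0)
        obtain ⟨e, hedef⟩ : ∃ e : Fin d → ℤ,
            e = fun j => if j = i₀ then (if p i₀ < r i₀ then 1 else -1) else 0 := ⟨_, rfl⟩
        have he0 : ∀ i, i ≠ i₀ → e i = 0 := by
          intro i hi; rw [hedef]; simp [hi]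
        have heabs : ∀ i, (e i).natAbs ≤ 1 := by
          intro i
          by_cases h : i = i₀
          · subst h; rw [hedef]; by_cases h2 : p i < r i <;> simp [h2]
          · rw [he0 i h]; simp
        obtain ⟨p', hp'def⟩ : ∃ p' : Fin d → ℤ, p' = p + e := ⟨_, rfl⟩
        have hstep : ∀ i, (r i - p' i).natAbs =
            if i = i₀ then (r i - p i).natAbs - 1 else (r i - p i).natAbs := by
          intro i
          by_cases h : i = i₀
          · subst h
            have hne : r i - p i ≠ 0 := by
              intro h0; apply hi₀; rw [h0]; rfl
            rw [hp'def, hedef]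
            simp only [Pi.add_apply, if_pos rfl, if_pos]
            by_cases hlt : p i < r i
            · simp only [if_pos hlt]; omega
            · simp only [if_neg hlt]; omega
          · rw [hp'def]
            simp only [Pi.add_apply, he0 i h, if_neg h, add_zero]
        have hsum' : (∑ i, (r i - p' i).natAbs) ≤ n := by
          have h1 : (∑ i, (r i - p' i).natAbs) =
              ∑ i, (if i = i₀ then (r i - p i).natAbs - 1 else (r i - p i).natAbs) :=
            Finset.sum_congr rfl fun i _ => hstep i
          have h2 : ∑ i, (if i = i₀ then (r i - p i).natAbs - 1 else (r i - p i).natAbs)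
              + 1 = ∑ i, (r i - p i).natAbs := by
            rw [← Finset.sum_erase_add _ _ (Finset.mem_univ i₀),
              ← Finset.sum_erase_add _ (fun i => (r i - p i).natAbs) (Finset.mem_univ i₀)]
            have h3 : ∑ i ∈ Finset.univ.erase i₀,
                (if i = i₀ then (r i - p i).natAbs - 1 else (r i - p i).natAbs)
                = ∑ i ∈ Finset.univ.erase i₀, (r i - p i).natAbs := by
              refine Finset.sum_congr rfl fun i hi => ?_
              simp [Finset.ne_of_mem_erase hi]
            rw [h3]
            rw [if_pos rfl]
            have hne : (r i₀ - p i₀).natAbs ≠ 0 := by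
              intro h0; exact hi₀ h0
            omega
          omega
        obtain ⟨k, hk, hkR⟩ := hsyn p'
        obtain ⟨s', hs'def⟩ : ∃ s' : Fin d → ℤ, s' = k + p' := ⟨_, rfl⟩
        rw [← hs'def] at hkR
        have hs'M : ∀ i, (s' i - p' i).natAbs ≤ M := by
          intro i
          rw [hs'def]
          simp only [Pi.add_apply, add_sub_cancel_right]
          exact hKM k hk i
        obtain ⟨c', hc'⟩ := ih p' r s' hr hkR hsum' hs'M
        have hf₀ : s' - s ∈ F := by
          rw [hFmem]
          refine ⟨Set.sub_mem_sub hkR hs, fun i => ?_⟩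
          have h1 := hKM k hk i
          have h2 := hsM i
          have h3 := heabs i
          have h4 : s' i = k i + (p i + e i) := by rw [hs'def, hp'def]; rfl
          simp only [Pi.sub_apply]
          omega
        refine ⟨fun f => (c' f) + (if f = s' - s then 1 else 0), ?_⟩
        have hsplit : ∑ f ∈ F, (((c' f) + (if f = s' - s then 1 else 0) : ℕ) : ℤ) • f
            = (∑ f ∈ F, (c' f : ℤ) • f)
              + ∑ f ∈ F, ((if f = s' - s then 1 else 0 : ℕ) : ℤ) • f := by
          rw [← Finset.sum_add_distrib]
          refine Finset.sum_congr rfl fun f _ => ?_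
          push_cast
          rw [add_smul]
        have hind : ∑ f ∈ F, ((if f = s' - s then 1 else 0 : ℕ) : ℤ) • f = s' - s := by
          rw [Finset.sum_eq_single (s' - s)]
          · simp
          · intro b _ hb; simp [hb]
          · intro h; exact absurd hf₀ h
        rw [hsplit, hind, ← hc']
        abel
  -- conclusion
  refine ⟨F, ?_, ?_, ?_⟩
  · intro v hv
    exact ((hFmem v).1 hv).1
  · intro v hv
    rw [hFmem] at hv ⊢
    obtain ⟨⟨a, ha, b, hb, rfl⟩, hbd⟩ := hv
    refine ⟨⟨b, hb, a, ha, by show b - a = -(a - b); abel⟩, fun i => ?_⟩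
    have := hbd i
    simp only [Pi.neg_apply, Pi.sub_apply] at *
    omega
  · rintro v ⟨a, ha, b, hb, rfl⟩
    exact key (∑ i, (a i - b i).natAbs) b a b ha hb le_rfl (fun i => by simp)
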